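/- Work in S = k[a₁₁, a₁₂, a₁₃, a₂₁, a₃₁, a₄₁][x,y]. Let f₀ = −x³ + x²·y·a₂₁ + x·y·a₃₁ + y·a₄₁ and f₃ = x²·y·a₁₃ − x·y²·a₂₁·a₁₃ + x·y·a₁₂ − y²·a₂₁·a₁₂ − y²·a₃₁·a₁₃ + y² + y·a₁₁; these are the maximal minors of the 4×3 matrix [[y² + y·a₁₁, y·a₁₂, y·a₁₃], [−x + y·a₂₁, 1, 0], [y·a₃₁, −x, 1], [y·a₄₁, 0, −x]] obtained by deleting the first row and the last row, respectively. Then the resultant of f₀ and f₃ with respect to x (f₀ having degree 3 and f₃ degree 2 in x), an element of k[a₁₁, a₁₂, a₁₃, a₂₁, a₃₁, a₄₁][y], has degree at most 6 as a polynomial in y. -/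

import Mathlib

noncomputable section

/-- The Sylvester matrix of two polynomials `p, q ∈ T[x]` of formal degrees `n` and `m`
respectively: a square matrix of size `m + n` whose first `m` columns carry the coefficients of
`p` and whose last `n` columns carry the coefficients of `q` (ascending order, shifted copies).
Its determinant is the resultant `res_x(p, q)`. -/
def sylvester {T : Type*} [CommRing T] (n m : ℕ) (p q : Polynomial T) :
    Matrix (Fin (m + n)) (Fin (m + n)) T :=
  fun i j =>
    if (j : ℕ) < m then
      (if (j : ℕ) ≤ (i : ℕ) then p.coeff ((i : ℕ) - (j : ℕ)) else 0)
    else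
      (if (j : ℕ) - m ≤ (i : ℕ) then q.coeff ((i : ℕ) - ((j : ℕ) - m)) else 0)

open Polynomial

set_option maxHeartbeats 4000000 in
/-- In `S = k[a₁₁,a₁₂,a₁₃,a₂₁,a₃₁,a₄₁][x,y]`, realized as
`(k[a][y])[x] = Polynomial (Polynomial (MvPolynomial (Fin 6) k))` with the variables
`a₁₁,…,a₄₁` indexed by `0,…,5`, `y` the inner polynomial variable and `x` the outer one, let
`f₀ = −x³ + x²ya₂₁ + xya₃₁ + ya₄₁` and
`f₃ = x²ya₁₃ − xy²a₂₁a₁₃ + xya₁₂ − y²a₂₁a₁₂ − y²a₃₁a₁₃ + y² + ya₁₁`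
be the two maximal minors of the spread-out Hilbert–Burch matrix of `E = (y², x³)`.  Then the
resultant of `f₀` and `f₃` with respect to `x` (with `f₀` of degree 3 and `f₃` of degree 2
in `x`), an element of `k[a][y]`, has degree at most 6 as a polynomial in `y`. -/
theorem stmt15 (k : Type*) [Field k]
    (x : Polynomial (Polynomial (MvPolynomial (Fin 6) k)))
    (y : Polynomial (Polynomial (MvPolynomial (Fin 6) k)))
    (a : Fin 6 → Polynomial (Polynomial (MvPolynomial (Fin 6) k)))
    (hx : x = Polynomial.X)
    (hy : y = Polynomial.C Polynomial.X)
    (ha : a = fun i => Polynomial.C (Polynomial.C (MvPolynomial.X i)))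
    (f₀ f₃ : Polynomial (Polynomial (MvPolynomial (Fin 6) k)))
    -- variable indices: a₁₁ = a 0, a₁₂ = a 1, a₁₃ = a 2, a₂₁ = a 3, a₃₁ = a 4, a₄₁ = a 5
    (hf₀ : f₀ = -x ^ 3 + x ^ 2 * y * a 3 + x * y * a 4 + y * a 5)
    (hf₃ : f₃ = x ^ 2 * y * a 2 - x * y ^ 2 * a 3 * a 2 + x * y * a 1
      - y ^ 2 * a 3 * a 1 - y ^ 2 * a 4 * a 2 + y ^ 2 + y * a 0) :
    (sylvester 3 2 f₀ f₃).det.degree ≤ 6 := by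
  subst hx hy ha
  set B0 : Polynomial (MvPolynomial (Fin 6) k) := X * C (MvPolynomial.X 0) with hB0
  set B1 : Polynomial (MvPolynomial (Fin 6) k) := X * C (MvPolynomial.X 1) with hB1
  set B2 : Polynomial (MvPolynomial (Fin 6) k) := X * C (MvPolynomial.X 2) with hB2
  set B3 : Polynomial (MvPolynomial (Fin 6) k) := X * C (MvPolynomial.X 3) with hB3
  set B4 : Polynomial (MvPolynomial (Fin 6) k) := X * C (MvPolynomial.X 4) with hB4
  set B5 : Polynomial (MvPolynomial (Fin 6) k) := X * C (MvPolynomial.X 5) with hB5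
  set q0 : Polynomial (MvPolynomial (Fin 6) k) := -(B3 * B1) - B4 * B2 + X ^ 2 + B0 with hq0
  set q1 : Polynomial (MvPolynomial (Fin 6) k) := -(B3 * B2) + B1 with hq1
  have ep : f₀ = C B5 + C B4 * X + C B3 * X ^ 2 - X ^ 3 := by
    rw [hf₀]; simp only [hB0, hB1, hB2, hB3, hB4, hB5, map_mul]; ring
  have eq3 : f₃ = C q0 + C q1 * X + C B2 * X ^ 2 := by
    rw [hf₃]
    simp only [hq0, hq1, hB0, hB1, hB2, hB3, hB4, hB5, map_mul, map_add, map_sub, map_neg,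
      map_pow]
    ring
  have cp0 : f₀.coeff 0 = B5 := by rw [ep]; simp
  have cp1 : f₀.coeff 1 = B4 := by rw [ep]; simp [coeff_one]
  have cp2 : f₀.coeff 2 = B3 := by rw [ep]; simp [coeff_one]
  have cp3 : f₀.coeff 3 = -1 := by rw [ep]; simp [coeff_one]
  have cp4 : f₀.coeff 4 = 0 := by rw [ep]; simp [coeff_one]
  have cq0 : f₃.coeff 0 = q0 := by rw [eq3]; simp
  have cq1 : f₃.coeff 1 = q1 := by rw [eq3]; simp
  have cq2 : f₃.coeff 2 = B2 := by rw [eq3]; simp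
  have cq3 : f₃.coeff 3 = 0 := by rw [eq3]; simp
  have cq4 : f₃.coeff 4 = 0 := by rw [eq3]; simp
  have h0 : sylvester 3 2 f₀ f₃ = Matrix.of ![
      ![B5, 0, q0, 0, 0],
      ![B4, B5, q1, q0, 0],
      ![B3, B4, B2, q1, q0],
      ![-1, B3, 0, B2, q1],
      ![0, -1, 0, 0, B2]] := by
    refine Matrix.ext fun i j => ?_
    fin_cases i <;> fin_cases j <;>
      simp [_root_.sylvester, Matrix.cons_val_succ, Matrix.vecHead, Matrix.vecTail, cp0, cp1, cp2,
        cp3, cp4, cq0, cq1, cq2, cq3, cq4]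
  rw [h0]
  have hdet : (Matrix.of ![
      ![B5, 0, q0, 0, 0],
      ![B4, B5, q1, q0, 0],
      ![B3, B4, B2, q1, q0],
      ![-1, B3, 0, B2, q1],
      ![0, -1, 0, 0, B2]]).det =
      B5 * (B5 * (B2 * (B2 * B2)) +
        (-(q1 * (B4 * (B2 * B2) + (-(q1 * (B3 * B2 + q1)) + q0 * B2))) +
          -(q0 * (B2 * (B3 * B2 + q1))))) +
      q0 * (B4 * (B4 * (B2 * B2) + (-(q1 * (B3 * B2 + q1)) + q0 * B2)) +
        (-(B5 * (B3 * (B2 * B2) + q1 * B2)) +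
          q0 * (B3 * (B3 * B2 + q1) + (B4 * B2 + q0)))) := by
    simp [Matrix.det_succ_row_zero, Fin.sum_univ_succ, Matrix.det_fin_three,
      Fin.succAbove]
    ring
  rw [hdet, hq0, hq1, hB0, hB1, hB2, hB3, hB4, hB5]
  ring_nf
  compute_degree
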